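/- For the uncertain shift semigroup on BUC(ℝ), defined by (S(t)f)(x) := sup_{|y|≤t} f(x+y), the family (S(t))_{t≥0} satisfies the semigroup law S(s+t)f = S(t)(S(s)f) for all s, t ≥ 0 and all bounded uniformly continuous f : ℝ → ℝ. -/
import Mathlib


/-- The uncertain shift semigroup on `BUC(ℝ)`: `(S t f) x = sup_{|y| ≤ t} f (x + y)`. -/
noncomputable def US (t : ℝ) (f : ℝ → ℝ) (x : ℝ) : ℝ :=
  sSup {z : ℝ | ∃ y : ℝ, |y| ≤ t ∧ z = f (x + y)}

lemma US_set_nonempty (f : ℝ → ℝ) {t : ℝ} (ht : 0 ≤ t) (x : ℝ) :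
    ({z : ℝ | ∃ y : ℝ, |y| ≤ t ∧ z = f (x + y)}).Nonempty :=
  ⟨f x, 0, by simpa using ht⟩

lemma US_set_bdd (f : ℝ → ℝ) {C : ℝ} (hb : ∀ x, |f x| ≤ C) (t x : ℝ) :
    BddAbove {z : ℝ | ∃ y : ℝ, |y| ≤ t ∧ z = f (x + y)} :=
  ⟨C, fun z ⟨y, _, hz⟩ => hz ▸ (abs_le.1 (hb _)).2⟩

lemma le_US (f : ℝ → ℝ) {C : ℝ} (hb : ∀ x, |f x| ≤ C) {t : ℝ} {x y : ℝ}
    (hy : |y| ≤ t) : f (x + y) ≤ US t f x :=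
  le_csSup (US_set_bdd f hb t x) ⟨y, hy, rfl⟩

lemma US_le (f : ℝ → ℝ) {t : ℝ} (ht : 0 ≤ t) {x M : ℝ}
    (h : ∀ y, |y| ≤ t → f (x + y) ≤ M) : US t f x ≤ M := by
  refine csSup_le (US_set_nonempty f ht x) ?_
  rintro z ⟨y, hy, rfl⟩
  exact h y hy

theorem stmt6 (f : ℝ → ℝ) (C : ℝ) (hb : ∀ x, |f x| ≤ C) (hu : UniformContinuous f)
    (s t : ℝ) (hs : 0 ≤ s) (ht : 0 ≤ t) (x : ℝ) :
    US (s + t) f x = US t (US s f) x := by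
  have hbUS : ∀ x, |US s f x| ≤ C := by
    intro x
    rw [abs_le]
    constructor
    · calc -C ≤ f (x + 0) := (abs_le.1 (hb _)).1
        _ ≤ US s f x := le_US f hb (by simpa using hs)
    · exact US_le f hs fun y _ => (abs_le.1 (hb _)).2
  apply le_antisymm
  · refine US_le f (by linarith) fun y hy => ?_
    set w : ℝ := max (-t) (min t y) with hw
    have hwt : |w| ≤ t := by
      rw [abs_le]
      constructor
      · exact le_max_left _ _
      · exact max_le (by linarith) (min_le_left _ _)
    have hvs : |y - w| ≤ s := by
      rw [abs_le] at hy ⊢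
      constructor
      · have : w ≤ max (-t) y := max_le_max le_rfl (min_le_right _ _)
        have h2 : max (-t) y ≤ y + s := max_le (by linarith) (by linarith)
        linarith [le_trans this h2]
      · have : min t y ≤ w := le_max_right _ _
        have h2 : y - s ≤ min t y := le_min (by linarith) (by linarith)
        linarith [le_trans h2 this]
    have h1 : f (x + y) ≤ US s f (x + w) := by
      have := le_US f hb (x := x + w) hvs
      rwa [show x + w + (y - w) = x + y by ring] at this
    exact h1.trans (le_US (US s f) hbUS hwt)
  · refine US_le (US s f) ht fun w hw => ?_
    refine US_le f hs fun v hv => ?_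
    have : |w + v| ≤ s + t := by
      calc |w + v| ≤ |w| + |v| := abs_add_le _ _
        _ ≤ s + t := by linarith
    have := le_US f hb (x := x) this
    rwa [show x + (w + v) = x + w + v by ring] at this
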